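/- Let L be a finite nonabelian solvable group whose center Z(L) is cyclic and such that every proper characteristic subgroup of L is contained in Z(L). Then L is an r-group for some prime r, the commutator subgroup L' is contained in Z(L) (so L is nilpotent of class 2), and every characteristic abelian subgroup of L is cyclic; that is, L is a symplectic-type r-group. -/

import Mathlib

/-- Let `L` be a finite nonabelian solvable group whose center is cyclic
and such that every proper characteristic subgroup of `L` is contained in `Z(L)`.  Then `L`
is an `r`-group for some prime `r`, `L' ≤ Z(L)` (so `L` is nilpotent of class 2), and every
characteristic abelian subgroup of `L` is cyclic, i.e. `L` is a symplectic-type `r`-group. -/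
theorem stmt_18 (L : Type) [Group L] [Finite L]
    (hna : ¬∀ a b : L, a * b = b * a)
    (hsolv : IsSolvable L)
    (hZcyc : IsCyclic (Subgroup.center L))
    (hchar : ∀ K : Subgroup L, K.Characteristic → K ≠ ⊤ → K ≤ Subgroup.center L) :
    (∃ r : ℕ, r.Prime ∧ IsPGroup r L) ∧
    commutator L ≤ Subgroup.center L ∧
    ∀ K : Subgroup L, K.Characteristic → (∀ a ∈ K, ∀ b ∈ K, a * b = b * a) → IsCyclic K := by
  have hnt : Nontrivial L := by
    rcases subsingleton_or_nontrivial L with h | h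
    · exact absurd (fun a b => Subsingleton.elim _ _) hna
    · exact h
  -- commutator ≠ ⊤
  have hcomm_ne : commutator L ≠ ⊤ := by
    intro h
    have htop : ∀ n, derivedSeries L n = ⊤ := by
      intro n
      induction n with
      | zero => exact derivedSeries_zero L
      | succ n ih => rw [derivedSeries_succ, ih, ← commutator_def, h]
    obtain ⟨n, hn⟩ := hsolv.solvable
    rw [htop n] at hn
    exact absurd hn.symm (bot_ne_top)
  have hcomm : commutator L ≤ Subgroup.center L :=
    hchar _ (Subgroup.commutator_characteristic ⊤ ⊤) hcomm_ne
  -- L is nilpotent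
  have hnil : Group.IsNilpotent L := by
    rw [nilpotent_iff_lowerCentralSeries]
    refine ⟨2, lowerCentralSeries_succ_eq_bot ⊤ ?_⟩
    rw [lowerCentralSeries_one]
    exact hcomm
  refine ⟨?_, hcomm, ?_⟩
  · -- L is an r-group for some prime r
    by_contra hno
    push_neg at hno
    -- every Sylow is proper, hence central
    have hsyl : ∀ (p : ℕ) (_ : Fact p.Prime) (P : Sylow p L),
        (P : Subgroup L) ≤ Subgroup.center L := by
      intro p hp P
      have hne : (P : Subgroup L) ≠ ⊤ := by
        intro htop
        refine hno p hp.out ?_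
        intro g
        obtain ⟨k, hk⟩ := P.isPGroup' ⟨g, htop ▸ Subgroup.mem_top g⟩
        refine ⟨k, ?_⟩
        have := congrArg (Subtype.val) hk
        simpa using this
      have h03 : Group.IsNilpotent L ↔ ∀ (p : ℕ) (_hp : Fact p.Prime) (P : Sylow p L),
          (↑P : Subgroup L).Normal := (isNilpotent_of_finite_tfae (G := L)).out 0 3
      have hnorm : (P : Subgroup L).Normal := h03.mp hnil p ‹Fact p.Prime› P
      exact hchar _ (P.characteristic_of_normal hnorm) hne
    have h04 : Group.IsNilpotent L ↔ Nonempty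
        ((∀ p : (Nat.card L).primeFactors, ∀ P : Sylow p L, (↑P : Subgroup L)) ≃* L) :=
      (isNilpotent_of_finite_tfae (G := L)).out 0 4
    obtain ⟨e⟩ := h04.mp hnil
    apply hna
    intro a b
    have hab : e.symm a * e.symm b = e.symm b * e.symm a := by
      funext p P
      haveI : Fact (Nat.Prime ↑p) := Fact.mk (Nat.prime_of_mem_primeFactors p.2)
      apply Subtype.ext
      have h1 := hsyl p ‹_› P (e.symm a p P).2
      rw [Subgroup.mem_center_iff] at h1
      exact (h1 _).symm
    calc a * b = e (e.symm a * e.symm b) := by simp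
    _ = e (e.symm b * e.symm a) := by rw [hab]
    _ = b * a := by simp
  · -- characteristic abelian subgroups are cyclic
    intro K hK habel
    have hne : K ≠ ⊤ := by
      intro h
      apply hna
      intro a b
      exact habel a (h ▸ Subgroup.mem_top a) b (h ▸ Subgroup.mem_top b)
    have hle : K ≤ Subgroup.center L := hchar K hK hne
    have : IsCyclic (K.subgroupOf (Subgroup.center L)) := Subgroup.isCyclic _
    exact isCyclic_of_surjective (Subgroup.subgroupOfEquivOfLe hle)
      (Subgroup.subgroupOfEquivOfLe hle).surjective
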